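/- Let K ⊆ L be an extension of fields of characteristic p > 0, each equipped with a family of additive operators (∂_i)_{i∈I} such that ∂_i on L restricts to ∂_i on K, and for each i there is m_i ∈ ℕ such that ∂_i(a·x) = a^{p^{m_i}} ∂_i(x) whenever a is a common constant and x is arbitrary. Assume K is strict, i.e. the constants K^∂ equal K^p. Then L^∂ and K are linearly disjoint over K^∂ = K^p. -/

import Mathlib

theorem stmt7 (p : ℕ) [Fact p.Prime]
    {L : Type*} [Field L] [CharP L p] (K : Subfield L)
    {I : Type*} (d : I → L → L) (m : I → ℕ)
    (hadd : ∀ i (x y : L), d i (x + y) = d i x + d i y)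
    (hres : ∀ i, ∀ x ∈ K, d i x ∈ K)
    (hlin : ∀ i (a x : L), (∀ j, d j a = 0) → d i (a * x) = a ^ p ^ m i * d i x)
    (hLconst : ∃ F : Subfield L, (F : Set L) = {x : L | ∀ i, d i x = 0})
    (hKconst : ∃ F : Subfield L, (F : Set L) = {x : L | x ∈ K ∧ ∀ i, d i x = 0})
    (hstrict : {x : L | x ∈ K ∧ ∀ i, d i x = 0} = {x : L | ∃ y ∈ K, y ^ p = x}) :
    ∀ (k : ℕ) (x : Fin k → L), (∀ j, ∀ i, d i (x j) = 0) →
      (∀ c : Fin k → L, (∀ j, c j ∈ K ∧ ∀ i, d i (c j) = 0) →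
        ∑ j, c j * x j = 0 → ∀ j, c j = 0) →
      ∀ c : Fin k → L, (∀ j, c j ∈ K) → ∑ j, c j * x j = 0 → ∀ j, c j = 0 := by
  have hp : p ≠ 0 := (Fact.out (p := p.Prime)).ne_zero
  obtain ⟨F, hF⟩ := hLconst
  have hmem : ∀ a : L, a ∈ F ↔ ∀ i, d i a = 0 := by
    intro a
    rw [← SetLike.mem_coe, hF]
    exact Iff.rfl
  have d1 : ∀ i, d i (1 : L) = 0 := (hmem 1).mp F.one_mem
  have d0 : ∀ i, d i (0 : L) = 0 := by
    intro i
    have h := hadd i 0 0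
    simp only [add_zero] at h
    have := right_eq_add.mp h
    exact this.symm ▸ this
  have dpow : ∀ (a : L), (∀ i, d i a = 0) → ∀ (n : ℕ) (i : I), d i (a ^ n) = 0 := by
    intro a ha n i
    exact (hmem _).mp (F.pow_mem ((hmem a).mpr ha) n) i
  have dsum : ∀ (i : I) (n : ℕ) (f : Fin n → L),
      d i (∑ j, f j) = ∑ j, d i (f j) := by
    intro i n f
    exact map_sum (AddMonoidHom.mk' (d i) (hadd i)) f Finset.univ
  intro k
  induction k with
  | zero =>
    intro x _ _ c _ _ j
    exact j.elim0
  | succ n IH =>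
    intro x hx hindep c hc hsum
    by_contra hcon
    push_neg at hcon
    obtain ⟨j0, hj0⟩ := hcon
    set c' : Fin (n + 1) → L := fun j => c j * (c j0)⁻¹ with hc'def
    have hc'K : ∀ j, c' j ∈ K := fun j => K.mul_mem (hc j) (K.inv_mem (hc j0))
    have hc'j0 : c' j0 = 1 := mul_inv_cancel₀ hj0
    have hsum' : ∑ j, c' j * x j = 0 := by
      have h : ∑ j, c' j * x j = (∑ j, c j * x j) * (c j0)⁻¹ := by
        rw [Finset.sum_mul]
        refine Finset.sum_congr rfl fun j _ => ?_
        simp [hc'def]; ring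
      rw [h, hsum, zero_mul]
    set y : ℕ → Fin n → L := fun M j => x (j0.succAbove j) ^ p ^ M with hydef
    have hyconst : ∀ M j i, d i (y M j) = 0 := fun M j i =>
      dpow _ (hx _) _ i
    -- Claim A : the families y M are linearly independent over the constants of K
    have claimA : ∀ M, ∀ b : Fin n → L, (∀ j, b j ∈ K ∧ ∀ i, d i (b j) = 0) →
        ∑ j, b j * y M j = 0 → ∀ j, b j = 0 := by
      intro M
      induction M with
      | zero =>
        intro b hb hbsum j
        set b' : Fin (n + 1) → L := j0.insertNth (0 : L) b with hb'def
        have hcond : ∀ t, b' t ∈ K ∧ ∀ i, d i (b' t) = 0 := by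
          intro t
          rw [hb'def]
          by_cases ht : t = j0
          · subst ht
            rw [Fin.insertNth_apply_same]
            exact ⟨K.zero_mem, fun i => d0 i⟩
          · obtain ⟨s, rfl⟩ := Fin.exists_succAbove_eq ht
            rw [Fin.insertNth_apply_succAbove]
            exact hb s
        have hsum0 : ∑ t, b' t * x t = 0 := by
          rw [hb'def, Fin.sum_univ_succAbove _ j0, Fin.insertNth_apply_same, zero_mul,
            zero_add]
          simpa [Fin.insertNth_apply_succAbove, hydef] using hbsum
        have hbz := hindep b' hcond hsum0 (j0.succAbove j)
        rwa [hb'def, Fin.insertNth_apply_succAbove] at hbz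
      | succ M IHM =>
        intro b hb hbsum j
        have ha : ∀ j, ∃ a, a ∈ K ∧ a ^ p = b j := by
          intro j
          have hbm : b j ∈ {x : L | x ∈ K ∧ ∀ i, d i x = 0} := ⟨(hb j).1, (hb j).2⟩
          rw [hstrict] at hbm
          obtain ⟨a, haK, hap⟩ := hbm
          exact ⟨a, haK, hap⟩
        choose a haK hap using ha
        have hsum2 : (∑ j, a j * y M j) ^ p = 0 := by
          rw [sum_pow_char]
          have h : ∑ j, (a j * y M j) ^ p = ∑ j, b j * y (M + 1) j := by
            refine Finset.sum_congr rfl fun j _ => ?_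
            rw [mul_pow, hap, hydef]
            simp only []
            rw [← pow_mul, ← pow_succ]
          rw [h, hbsum]
        have hsum3 : ∑ j, a j * y M j = 0 := pow_eq_zero_iff hp |>.mp hsum2
        have haz : a j = 0 := IH (y M) (hyconst M) IHM a haK hsum3 j
        rw [← hap j, haz, zero_pow hp]
    have KindepY : ∀ M, ∀ b : Fin n → L, (∀ j, b j ∈ K) →
        ∑ j, b j * y M j = 0 → ∀ j, b j = 0 :=
      fun M => IH (y M) (hyconst M) (claimA M)
    have hdc' : ∀ (i : I) (j : Fin (n + 1)), d i (c' j) = 0 := by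
      intro i
      have hstep : ∑ j : Fin n, d i (c' (j0.succAbove j)) * y (m i) j = 0 := by
        have h1 : d i (∑ j, c' j * x j) = 0 := by rw [hsum']; exact d0 i
        rw [dsum] at h1
        have h2 : ∀ j, d i (c' j * x j) = x j ^ p ^ m i * d i (c' j) := by
          intro j
          rw [mul_comm (c' j) (x j)]
          exact hlin i (x j) (c' j) (hx j)
        rw [Finset.sum_congr rfl fun j _ => h2 j] at h1
        rw [Fin.sum_univ_succAbove _ j0] at h1
        have hz : x j0 ^ p ^ m i * d i (c' j0) = 0 := by
          rw [hc'j0, d1, mul_zero]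
        rw [hz, zero_add] at h1
        calc ∑ j : Fin n, d i (c' (j0.succAbove j)) * y (m i) j
            = ∑ j : Fin n, x (j0.succAbove j) ^ p ^ m i * d i (c' (j0.succAbove j)) := by
              refine Finset.sum_congr rfl fun j _ => ?_
              rw [mul_comm]
          _ = 0 := h1
      intro j
      by_cases hjj : j = j0
      · subst hjj
        rw [hc'j0]
        exact d1 i
      · obtain ⟨t, rfl⟩ := Fin.exists_succAbove_eq hjj
        exact KindepY (m i) _ (fun s => hres i _ (hc'K _)) hstep t
    have hfin := hindep c' (fun j => ⟨hc'K j, fun i => hdc' i j⟩) hsum' j0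
    rw [hc'j0] at hfin
    exact one_ne_zero hfin
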